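/- Let f, g : ℝ → ℝ be monotone increasing and lower semicontinuous with f ≠ g. Then the sets {(a,c) ∈ ℚ × ℚ | (c:ℝ) < f a} and {(a,c) ∈ ℚ × ℚ | (c:ℝ) < g a} are distinct. -/

import Mathlib

open Filter Topology Set

lemma aux_not_lt (f g : ℝ → ℝ) (hgm : Monotone g) (hfl : LowerSemicontinuous f)
    (hq : ∀ q : ℚ, f q = g q) (x : ℝ) : ¬ g x < f x := by
  intro h
  have h2 := hfl x (g x) h
  rw [Metric.eventually_nhds_iff] at h2
  obtain ⟨δ, hδ, hball⟩ := h2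
  obtain ⟨q, hq1, hq2⟩ := exists_rat_btwn (sub_lt_self x hδ)
  have hdist : dist (q : ℝ) x < δ := by
    rw [Real.dist_eq, abs_lt]; constructor <;> linarith
  have := hball hdist
  simp only [hq q] at this
  exact absurd (hgm hq2.le) (not_le.mpr this)

theorem stmt_4 (f g : ℝ → ℝ)
    (hfm : Monotone f) (hgm : Monotone g)
    (hfl : LowerSemicontinuous f) (hgl : LowerSemicontinuous g)
    (hne : f ≠ g) :
    {p : ℚ × ℚ | ((p.2 : ℝ)) < f ((p.1 : ℝ))} ≠ {p : ℚ × ℚ | ((p.2 : ℝ)) < g ((p.1 : ℝ))} := by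
  intro hset
  apply hne
  have hrat : ∀ q : ℚ, f q = g q := by
    intro a
    by_contra hne'
    rcases lt_or_gt_of_ne hne' with h | h
    · obtain ⟨c, hc1, hc2⟩ := exists_rat_btwn h
      have : (a, c) ∈ {p : ℚ × ℚ | ((p.2 : ℝ)) < g ((p.1 : ℝ))} := hc2
      rw [← hset] at this
      exact absurd this (not_lt.mpr hc1.le)
    · obtain ⟨c, hc1, hc2⟩ := exists_rat_btwn h
      have : (a, c) ∈ {p : ℚ × ℚ | ((p.2 : ℝ)) < f ((p.1 : ℝ))} := hc2
      rw [hset] at this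
      exact absurd this (not_lt.mpr hc1.le)
  funext x
  have h1 := aux_not_lt f g hgm hfl hrat x
  have h2 := aux_not_lt g f hfm hgl (fun q => (hrat q).symm) x
  linarith [not_lt.mp h1, not_lt.mp h2]
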